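/- For mean-zero L² random variables Y, W_Z, W_Y, Z, U, the regression coefficient β_{w_z} := Cov(W_Z^{⊥W_Y,U,Z}, Y^{⊥W_Y,U,Z}) / Var(W_Z^{⊥W_Y,U,Z}) satisfies β_{w_z} = R_{Y∼W_Z|W_Y,Z,U} · sqrt( [Var(Y)/Var(W_Z)] · (1 − R²_{Y∼U|W_Y,Z})(1 − R²_{Y∼W_Y,Z}) / [ (1 − R²_{W_Z∼U|W_Y,Z})(1 − R²_{W_Z∼W_Y,Z}) ] ). -/

import Mathlib

open Submodule RealInnerProductSpace

/-- Residual of `A` after orthogonal projection onto the span of the finite set `S`. -/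
noncomputable def resid {H : Type*} [NormedAddCommGroup H] [InnerProductSpace ℝ H]
    [CompleteSpace H] (A : H) (S : Set H) (hS : S.Finite) : H :=
  haveI := hS.to_subtype
  haveI : FiniteDimensional ℝ (span ℝ S) := FiniteDimensional.span_of_finite ℝ hS
  A - (orthogonalProjection (span ℝ S) A : H)

/-- Correlation of two (mean-zero) random variables modeled as Hilbert-space vectors. -/
noncomputable def corr {H : Type*} [NormedAddCommGroup H] [InnerProductSpace ℝ H]
    (a b : H) : ℝ := ⟪a, b⟫ / (‖a‖ * ‖b‖)

/-- Squared multiple correlation `R²_{A∼S} = 1 − Var(A^{⊥S})/Var(A)`. -/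
noncomputable def R2m {H : Type*} [NormedAddCommGroup H] [InnerProductSpace ℝ H]
    [CompleteSpace H] (A : H) (S : Set H) (hS : S.Finite) : ℝ :=
  1 - ⟪resid A S hS, resid A S hS⟫ / ⟪A, A⟫

section Aux

variable {H : Type*} [NormedAddCommGroup H] [InnerProductSpace ℝ H] [CompleteSpace H]

omit [CompleteSpace H] in
lemma mem_orthogonal_span' {T : Set H} {v : H} (h : ∀ u ∈ T, ⟪u, v⟫ = 0) :
    v ∈ (span ℝ T)ᗮ := by
  rw [Submodule.mem_orthogonal]
  intro u hu
  induction hu using Submodule.span_induction with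
  | mem x hx => exact h x hx
  | zero => simp
  | add x y _ _ hx hy => simp [inner_add_left, hx, hy]
  | smul a x _ hx => simp [inner_smul_left, hx]

lemma resid_mem_orth (A : H) (S : Set H) (hS : S.Finite) :
    resid A S hS ∈ (span ℝ S)ᗮ := by
  haveI := hS.to_subtype
  haveI : FiniteDimensional ℝ (span ℝ S) := FiniteDimensional.span_of_finite ℝ hS
  exact sub_starProjection_mem_orthogonal A

lemma sub_resid_mem (A : H) (S : Set H) (hS : S.Finite) :
    A - resid A S hS ∈ span ℝ S := by
  haveI := hS.to_subtype
  haveI : FiniteDimensional ℝ (span ℝ S) := FiniteDimensional.span_of_finite ℝ hS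
  show A - (A - (orthogonalProjection (span ℝ S) A : H)) ∈ span ℝ S
  simp

lemma resid_unique {A r : H} {S : Set H} (hS : S.Finite)
    (hmem : A - r ∈ span ℝ S) (horth : r ∈ (span ℝ S)ᗮ) : resid A S hS = r := by
  haveI := hS.to_subtype
  haveI : FiniteDimensional ℝ (span ℝ S) := FiniteDimensional.span_of_finite ℝ hS
  have h : (orthogonalProjection (span ℝ S) A : H) = A - r :=
    eq_starProjection_of_mem_orthogonal (K := span ℝ S) hmem
      (by simpa using horth)
  show A - (orthogonalProjection (span ℝ S) A : H) = r
  rw [h]; abel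

lemma resid_congr (A : H) {S T : Set H} (hS : S.Finite) (hT : T.Finite) (h : S = T) :
    resid A S hS = resid A T hT := by subst h; rfl

lemma resid_insert (A U' : H) (S : Set H) (hS : S.Finite) :
    resid A (insert U' S) (hS.insert U') =
      resid A S hS - (⟪resid U' S hS, resid A S hS⟫ / ⟪resid U' S hS, resid U' S hS⟫) •
        resid U' S hS := by
  set rA := resid A S hS with hrA
  set rU := resid U' S hS with hrU
  set c : ℝ := ⟪rU, rA⟫ / ⟪rU, rU⟫ with hc
  have hrUmem : rU ∈ span ℝ (insert U' S) := by
    have h1 : U' ∈ span ℝ (insert U' S) := subset_span (Set.mem_insert _ _)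
    have h2 : U' - rU ∈ span ℝ (insert U' S) :=
      span_mono (Set.subset_insert _ _) (sub_resid_mem U' S hS)
    have := sub_mem h1 h2
    simpa using this
  have hrAo : rA ∈ (span ℝ S)ᗮ := resid_mem_orth A S hS
  have hrUo : rU ∈ (span ℝ S)ᗮ := resid_mem_orth U' S hS
  apply resid_unique
  · have h1 : A - rA ∈ span ℝ (insert U' S) :=
      span_mono (Set.subset_insert _ _) (sub_resid_mem A S hS)
    have h2 : A - (rA - c • rU) = (A - rA) + c • rU := by abel
    rw [h2]
    exact add_mem h1 (smul_mem _ _ hrUmem)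
  · apply mem_orthogonal_span'
    intro u hu
    rcases hu with rfl | hu
    · -- u = U'
      have hU'dec : ⟪u, rA - c • rU⟫ = ⟪(u - rU) + rU, rA - c • rU⟫ := by
        congr 1; abel
      rw [hU'dec]
      have hmem : u - rU ∈ span ℝ S := sub_resid_mem u S hS
      have h1 : ⟪u - rU, rA⟫ = 0 := (Submodule.mem_orthogonal _ _).1 hrAo _ hmem
      have h2 : ⟪u - rU, rU⟫ = 0 := (Submodule.mem_orthogonal _ _).1 hrUo _ hmem
      rw [inner_add_left, inner_sub_right, inner_sub_right, inner_smul_right,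
        inner_smul_right, h1, h2, hc]
      by_cases hU0 : ⟪rU, rU⟫ = (0:ℝ)
      · have : rU = 0 := by
          have := inner_self_eq_zero (𝕜 := ℝ).1 hU0
          exact this
        simp [this]
      · field_simp; ring
    · have hmem : u ∈ span ℝ S := subset_span hu
      have h1 : ⟪u, rA⟫ = 0 := (Submodule.mem_orthogonal _ _).1 hrAo _ hmem
      have h2 : ⟪u, rU⟫ = 0 := (Submodule.mem_orthogonal _ _).1 hrUo _ hmem
      rw [inner_sub_right, inner_smul_right, h1, h2]; ring

lemma inner_resid_insert (A U' : H) (S : Set H) (hS : S.Finite)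
    (hU : resid U' S hS ≠ 0) :
    ⟪resid A (insert U' S) (hS.insert U'), resid A (insert U' S) (hS.insert U')⟫ =
      ⟪resid A S hS, resid A S hS⟫ -
        ⟪resid A S hS, resid U' S hS⟫ ^ 2 / ⟪resid U' S hS, resid U' S hS⟫ := by
  set rA := resid A S hS
  set rU := resid U' S hS
  have hUU : ⟪rU, rU⟫ ≠ (0:ℝ) := fun h => hU (inner_self_eq_zero (𝕜 := ℝ).1 h)
  rw [resid_insert A U' S hS]
  rw [inner_sub_sub_self]
  rw [inner_smul_right, inner_smul_left, inner_smul_left, inner_smul_right]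
  rw [real_inner_comm rU rA]
  simp only [conj_trivial, rA, rU] at hUU ⊢
  field_simp
  ring

end Aux

set_option maxHeartbeats 1600000 in
/-- Equation (beta_wz_r2_1) in the proof of Theorem 1: the partial regression coefficient
`β_{w_z} = Cov(W_Z^{⊥W_Y,U,Z}, Y^{⊥W_Y,U,Z}) / Var(W_Z^{⊥W_Y,U,Z})` satisfies
`β_{w_z} = R_{Y∼W_Z|W_Y,Z,U} · √( [Var(Y)/Var(W_Z)] ·
  (1 − R²_{Y∼U|W_Y,Z})(1 − R²_{Y∼W_Y,Z}) / [(1 − R²_{W_Z∼U|W_Y,Z})(1 − R²_{W_Z∼W_Y,Z})] )`. -/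
theorem stmt_12 {H : Type*} [NormedAddCommGroup H] [InnerProductSpace ℝ H] [CompleteSpace H]
    (Y WZ WY Z U : H)
    (hv1 : resid WZ {WY, U, Z} (Set.toFinite _) ≠ 0)
    (hv2 : resid Y {WY, U, Z} (Set.toFinite _) ≠ 0)
    (hv3 : resid Y {WY, Z} (Set.toFinite _) ≠ 0)
    (hv4 : resid U {WY, Z} (Set.toFinite _) ≠ 0)
    (hv5 : resid WZ {WY, Z} (Set.toFinite _) ≠ 0)
    (hvarY : 0 < ⟪Y, Y⟫) (hvarWZ : 0 < ⟪WZ, WZ⟫)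
    (hd1 : 0 < 1 - (corr (resid WZ {WY, Z} (Set.toFinite _))
                      (resid U {WY, Z} (Set.toFinite _)))^2)
    (hd2 : 0 < 1 - R2m WZ {WY, Z} (Set.toFinite _))
    (βwz : ℝ)
    (hβwz : βwz = ⟪resid WZ {WY, U, Z} (Set.toFinite _), resid Y {WY, U, Z} (Set.toFinite _)⟫ /
                    ⟪resid WZ {WY, U, Z} (Set.toFinite _), resid WZ {WY, U, Z} (Set.toFinite _)⟫) :
    βwz = corr (resid Y {WY, Z, U} (Set.toFinite _)) (resid WZ {WY, Z, U} (Set.toFinite _)) *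
      Real.sqrt ((⟪Y, Y⟫ / ⟪WZ, WZ⟫) *
        ((1 - (corr (resid Y {WY, Z} (Set.toFinite _))
                 (resid U {WY, Z} (Set.toFinite _)))^2) *
         (1 - R2m Y {WY, Z} (Set.toFinite _))) /
        ((1 - (corr (resid WZ {WY, Z} (Set.toFinite _))
                 (resid U {WY, Z} (Set.toFinite _)))^2) *
         (1 - R2m WZ {WY, Z} (Set.toFinite _)))) := by
  have hSfin : (({WY, Z} : Set H)).Finite := Set.toFinite _
  have hset1 : ({WY, U, Z} : Set H) = insert U {WY, Z} := by
    ext x; simp; tauto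
  have hset2 : ({WY, Z, U} : Set H) = insert U {WY, Z} := by
    ext x; simp; tauto
  -- rename residuals
  set rY := resid Y {WY, Z} (Set.toFinite _) with hrY
  set rW := resid WZ {WY, Z} (Set.toFinite _) with hrW
  set rU := resid U {WY, Z} (Set.toFinite _) with hrU
  set tY := resid Y (insert U {WY, Z}) (hSfin.insert U) with htY
  set tW := resid WZ (insert U {WY, Z}) (hSfin.insert U) with htW
  have eY1 : resid Y {WY, U, Z} (Set.toFinite _) = tY := resid_congr Y _ _ hset1
  have eW1 : resid WZ {WY, U, Z} (Set.toFinite _) = tW := resid_congr WZ _ _ hset1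
  have eY2 : resid Y {WY, Z, U} (Set.toFinite _) = tY := resid_congr Y _ _ hset2
  have eW2 : resid WZ {WY, Z, U} (Set.toFinite _) = tW := resid_congr WZ _ _ hset2
  have htY0 : tY ≠ 0 := eY1 ▸ hv2
  have htW0 : tW ≠ 0 := eW1 ▸ hv1
  -- positive inner products
  have pYY : (0:ℝ) < ⟪rY, rY⟫ := by
    rw [real_inner_self_eq_norm_sq]; exact pow_pos (norm_pos_iff.2 hv3) 2
  have pWW : (0:ℝ) < ⟪rW, rW⟫ := by
    rw [real_inner_self_eq_norm_sq]; exact pow_pos (norm_pos_iff.2 hv5) 2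
  have pUU : (0:ℝ) < ⟪rU, rU⟫ := by
    rw [real_inner_self_eq_norm_sq]; exact pow_pos (norm_pos_iff.2 hv4) 2
  have pTY : (0:ℝ) < ⟪tY, tY⟫ := by
    rw [real_inner_self_eq_norm_sq]; exact pow_pos (norm_pos_iff.2 htY0) 2
  have pTW : (0:ℝ) < ⟪tW, tW⟫ := by
    rw [real_inner_self_eq_norm_sq]; exact pow_pos (norm_pos_iff.2 htW0) 2
  -- key identities
  have keyY : ⟪tY, tY⟫ = ⟪rY, rY⟫ - ⟪rY, rU⟫ ^ 2 / ⟪rU, rU⟫ :=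
    inner_resid_insert Y U {WY, Z} hSfin hv4
  have keyW : ⟪tW, tW⟫ = ⟪rW, rW⟫ - ⟪rW, rU⟫ ^ 2 / ⟪rU, rU⟫ :=
    inner_resid_insert WZ U {WY, Z} hSfin hv4
  -- rewrite corr and R2m
  have hnY : ‖rY‖ * ‖rY‖ = ⟪rY, rY⟫ := (real_inner_self_eq_norm_mul_norm rY).symm
  have hnW : ‖rW‖ * ‖rW‖ = ⟪rW, rW⟫ := (real_inner_self_eq_norm_mul_norm rW).symm
  have hnU : ‖rU‖ * ‖rU‖ = ⟪rU, rU⟫ := (real_inner_self_eq_norm_mul_norm rU).symm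
  have hcorrY : (corr rY rU) ^ 2 = ⟪rY, rU⟫ ^ 2 / (⟪rY, rY⟫ * ⟪rU, rU⟫) := by
    rw [corr, div_pow, mul_pow, real_inner_self_eq_norm_sq rY, real_inner_self_eq_norm_sq rU]
  have hcorrW : (corr rW rU) ^ 2 = ⟪rW, rU⟫ ^ 2 / (⟪rW, rW⟫ * ⟪rU, rU⟫) := by
    rw [corr, div_pow, mul_pow, real_inner_self_eq_norm_sq rW, real_inner_self_eq_norm_sq rU]
  have hR2Y : 1 - R2m Y {WY, Z} (Set.toFinite _) = ⟪rY, rY⟫ / ⟪Y, Y⟫ := by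
    rw [R2m]; ring
  have hR2W : 1 - R2m WZ {WY, Z} (Set.toFinite _) = ⟪rW, rW⟫ / ⟪WZ, WZ⟫ := by
    rw [R2m]; ring
  -- the sqrt argument equals ⟪tY,tY⟫ / ⟪tW,tW⟫
  have harg : (⟪Y, Y⟫ / ⟪WZ, WZ⟫) *
        ((1 - (corr rY rU)^2) * (1 - R2m Y {WY, Z} (Set.toFinite _))) /
        ((1 - (corr rW rU)^2) * (1 - R2m WZ {WY, Z} (Set.toFinite _))) =
      ⟪tY, tY⟫ / ⟪tW, tW⟫ := by
    rw [hcorrY, hcorrW, hR2Y, hR2W, keyY, keyW]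
    rw [div_eq_div_iff]
    · field_simp
    · rw [keyW] at pTW
      have h1 : (0:ℝ) < ⟪rW, rW⟫ * ⟪rU, rU⟫ - ⟪rW, rU⟫ ^ 2 := by
        have hm := mul_pos pTW pUU
        have hc : ⟪rW, rU⟫ ^ 2 / ⟪rU, rU⟫ * ⟪rU, rU⟫ = ⟪rW, rU⟫ ^ 2 :=
          div_mul_cancel₀ _ (ne_of_gt pUU)
        nlinarith [hm, hc]
      have : (1 - ⟪rW, rU⟫ ^ 2 / (⟪rW, rW⟫ * ⟪rU, rU⟫)) * (⟪rW, rW⟫ / ⟪WZ, WZ⟫) =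
          (⟪rW, rW⟫ * ⟪rU, rU⟫ - ⟪rW, rU⟫ ^ 2) / (⟪rU, rU⟫ * ⟪WZ, WZ⟫) := by
        field_simp
      rw [this]
      positivity
    · rw [keyW] at pTW; exact ne_of_gt pTW
  -- sqrt of the ratio
  have hsqrt : Real.sqrt (⟪tY, tY⟫ / ⟪tW, tW⟫) = ‖tY‖ / ‖tW‖ := by
    rw [real_inner_self_eq_norm_sq tY, real_inner_self_eq_norm_sq tW,
      ← div_pow, Real.sqrt_sq (by positivity)]
  -- conclude
  rw [hβwz, eY1, eW1, eY2, eW2, harg, hsqrt, corr]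
  have hnTY : (0:ℝ) < ‖tY‖ := norm_pos_iff.2 htY0
  have hnTW : (0:ℝ) < ‖tW‖ := norm_pos_iff.2 htW0
  rw [real_inner_comm tW tY, real_inner_self_eq_norm_mul_norm tW]
  field_simp
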